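/- Let X be a random variable drawn from either P or Q. Assume Pr_P[|X| ≤ 1] = 1 and that there exist ε, σ², K_1, K_2 > 0 such that Pr_Q[|X| ≤ 1] ≥ 1−ε and Pr_Q[|X| ≥ t] ≤ K_2·exp(−t²/(K_1σ²)) for all 0 ≤ t ≤ 1. Then there exists K_3 = K_3(K_1, K_2, ε) > 0 such that E_P[X²] ≤ K_3·σ²·(D(P||Q) + 1). -/

import Mathlib

open Finset

def IsDist {α : Type*} [Fintype α] (P : α → ℝ) : Prop :=
  (∀ x, 0 ≤ P x) ∧ ∑ x, P x = 1

noncomputable def KL {α : Type*} [Fintype α] (P Q : α → ℝ) : ℝ :=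
  ∑ x, P x * Real.log (P x / Q x)

lemma KL_nonneg_aux {α : Type} [Fintype α] (P Q : α → ℝ) (hP : IsDist P) (hQ : IsDist Q)
    (hac : ∀ x, Q x = 0 → P x = 0) : 0 ≤ KL P Q := by
  have key : ∀ x, P x - Q x ≤ P x * Real.log (P x / Q x) := by
    intro x
    rcases (hP.1 x).eq_or_lt with h | h
    · simp [← h]
      exact hQ.1 x
    · have hQx : 0 < Q x := by
        rcases (hQ.1 x).eq_or_lt with h0 | h0
        · exact absurd (hac x h0.symm) h.ne'
        · exact h0
      have h2 := Real.log_le_sub_one_of_pos (show 0 < Q x / P x by positivity)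
      have h3 : Real.log (P x / Q x) = - Real.log (Q x / P x) := by
        rw [← Real.log_inv, inv_div]
      have h4 := mul_le_mul_of_nonneg_left h2 (hP.1 x)
      have h5 : P x * (Q x / P x) = Q x := by field_simp
      nlinarith [h4, h5]
  calc (0:ℝ) = ∑ x, (P x - Q x) := by rw [Finset.sum_sub_distrib, hP.2, hQ.2, sub_self]
    _ ≤ KL P Q := Finset.sum_le_sum (fun x _ => key x)

lemma dv_linear_aux {α : Type} [Fintype α] (P Q : α → ℝ) (f : α → ℝ) (hP : IsDist P)
    (hQ : IsDist Q) (hac : ∀ x, Q x = 0 → P x = 0) :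
    ∑ x, P x * f x ≤ KL P Q + ((∑ x, Q x * Real.exp (f x)) - 1) := by
  have key : ∀ x, P x * f x ≤ P x * Real.log (P x / Q x) + (Q x * Real.exp (f x) - P x) := by
    intro x
    rcases (hP.1 x).eq_or_lt with h | h
    · have : 0 ≤ Q x * Real.exp (f x) := mul_nonneg (hQ.1 x) (Real.exp_pos _).le
      simp [← h]
      linarith
    · have hQx : 0 < Q x := by
        rcases (hQ.1 x).eq_or_lt with h0 | h0
        · exact absurd (hac x h0.symm) h.ne'
        · exact h0
      have h2 := Real.log_le_sub_one_of_pos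
        (show 0 < Real.exp (f x) * (Q x / P x) by positivity)
      have hlogeq : Real.log (Real.exp (f x) * (Q x / P x)) = f x - Real.log (P x / Q x) := by
        rw [Real.log_mul (Real.exp_ne_zero _) (by positivity), Real.log_exp,
          Real.log_div hQx.ne' h.ne', Real.log_div h.ne' hQx.ne']
        ring
      rw [hlogeq] at h2
      have h3 := mul_le_mul_of_nonneg_left h2 (hP.1 x)
      have h4 : P x * (Real.exp (f x) * (Q x / P x)) = Q x * Real.exp (f x) := by
        field_simp
      nlinarith [h3, h4]
  calc ∑ x, P x * f x
      ≤ ∑ x, (P x * Real.log (P x / Q x) + (Q x * Real.exp (f x) - P x)) :=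
        Finset.sum_le_sum (fun x _ => key x)
    _ = KL P Q + ((∑ x, Q x * Real.exp (f x)) - ∑ x, P x) := by
        rw [Finset.sum_add_distrib, Finset.sum_sub_distrib]; rfl
    _ = KL P Q + ((∑ x, Q x * Real.exp (f x)) - 1) := by rw [hP.2]

set_option maxHeartbeats 1000000 in
/-- If `|X| ≤ 1` `P`-almost surely, `Pr_Q[|X| ≤ 1] ≥ 1 − ε`, and `Q` has the
sub-Gaussian tail bound `Pr_Q[|X| ≥ t] ≤ K₂ exp(−t²/(K₁σ²))` for `0 ≤ t ≤ 1`, then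
there exists `K₃ = K₃(K₁, K₂, ε) > 0` with `E_P[X²] ≤ K₃ σ² (D(P||Q) + 1)`.
(We assume `P ≪ Q`, as the statement is trivial when `D(P||Q) = ∞`.) -/
theorem sq_moment_le_of_subgaussian (K₁ K₂ ε : ℝ) (hK₁ : 0 < K₁) (hK₂ : 0 < K₂)
    (hε : 0 < ε) :
    ∃ K₃ : ℝ, 0 < K₃ ∧
      ∀ (α : Type) [Fintype α], ∀ (P Q : α → ℝ) (X : α → ℝ) (σ2 : ℝ),
        0 < σ2 → IsDist P → IsDist Q → (∀ x, Q x = 0 → P x = 0) →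
        (∑ x, P x * (if |X x| ≤ 1 then 1 else 0)) = 1 →
        1 - ε ≤ ∑ x, Q x * (if |X x| ≤ 1 then 1 else 0) →
        (∀ t : ℝ, 0 ≤ t → t ≤ 1 →
          ∑ x, Q x * (if t ≤ |X x| then 1 else 0) ≤
            K₂ * Real.exp (-(t ^ 2) / (K₁ * σ2))) →
        ∑ x, P x * (X x) ^ 2 ≤ K₃ * σ2 * (KL P Q + 1) := by
  refine ⟨2 * K₁ * (1 + 3 * K₂), by positivity, ?_⟩
  intro α _ P Q X σ2 hσ hP hQ hac hPsupp hQsupp htail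
  set L : ℝ := 1 / (2 * K₁ * σ2) with hLdef
  have hL : 0 < L := by positivity
  set N : ℕ := Nat.ceil L + 1 with hNdef
  have hN0 : 0 < (N : ℝ) := by
    have : 0 < N := Nat.succ_pos _
    exact_mod_cast this
  have hLN : L ≤ (N : ℝ) := by
    refine le_trans (Nat.le_ceil L) ?_
    rw [hNdef]; push_cast; linarith
  set c : ℝ := L / N with hcdef
  have hc : 0 < c := div_pos hL hN0
  have hc1 : c ≤ 1 := by rw [hcdef, div_le_one hN0]; exact hLN
  set g : α → ℝ := fun x => min (X x ^ 2) 1 with hgdef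
  have hg0 : ∀ x, 0 ≤ g x := fun x => le_min (sq_nonneg _) one_pos.le
  have hg1 : ∀ x, g x ≤ 1 := fun x => min_le_right _ _
  -- Step 1: pointwise layer bound
  have layer : ∀ x, Real.exp (L * g x) - 1 ≤
      ∑ k ∈ range N, (Real.exp (c * (k + 1)) - Real.exp (c * k)) *
        (if (k : ℝ) / N ≤ g x then 1 else 0) := by
    intro x
    set m : ℕ := min N (Nat.floor (g x * N) + 1) with hmdef
    have hRHS : (∑ k ∈ range N, (Real.exp (c * (k + 1)) - Real.exp (c * k)) *
        (if (k : ℝ) / N ≤ g x then 1 else 0)) = Real.exp (c * m) - 1 := by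
      have h1 : ∀ k ∈ range N, (Real.exp (c * (k + 1)) - Real.exp (c * k)) *
          (if (k : ℝ) / N ≤ g x then 1 else 0) =
          if k ∈ range m then Real.exp (c * (k + 1)) - Real.exp (c * k) else 0 := by
        intro k hk
        have hkN : k < N := mem_range.mp hk
        by_cases h : (k : ℝ) / N ≤ g x
        · have hkm : k ∈ range m := by
            rw [mem_range, hmdef, lt_min_iff]
            refine ⟨hkN, ?_⟩
            have h' : (k : ℝ) ≤ g x * N := by
              rw [div_le_iff₀ hN0] at h; exact h
            have := Nat.le_floor h'
            omega
          simp [h, hkm]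
        · have hkm : k ∉ range m := by
            rw [mem_range, hmdef, lt_min_iff]
            push_neg at h
            have h' : g x * N < (k : ℝ) := by
              have := (lt_div_iff₀ hN0).mp h
              linarith
            have : Nat.floor (g x * N) < k := by
              rw [Nat.floor_lt (by positivity)]
              exact h'
            omega
          simp [h, hkm]
      rw [Finset.sum_congr rfl h1, Finset.sum_ite_mem,
        Finset.inter_eq_right.mpr (Finset.range_subset_range.mpr (min_le_left _ _))]
      have htel := Finset.sum_range_sub (fun k : ℕ => Real.exp (c * k)) m
      simp only [Nat.cast_zero, mul_zero, Real.exp_zero] at htel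
      rw [← htel]
      apply Finset.sum_congr rfl
      intro k _
      push_cast
      ring_nf
    rw [hRHS]
    have hgm : g x * N ≤ (m : ℝ) := by
      rw [hmdef, Nat.cast_min]
      refine le_min ?_ ?_
      · nlinarith [hg1 x, hN0]
      · exact_mod_cast (Nat.lt_floor_add_one (g x * N)).le
    have harg : L * g x ≤ c * m := by
      have h1 : L * g x = c * (g x * N) := by
        rw [hcdef]; field_simp
      rw [h1]
      exact mul_le_mul_of_nonneg_left hgm hc.le
    have := Real.exp_le_exp.mpr harg
    linarith
  -- Step 2: bound on the Q-side moment generating sum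
  have qsum : ∑ x, Q x * (Real.exp (L * g x) - 1) ≤ 3 * K₂ := by
    have step1 : ∑ x, Q x * (Real.exp (L * g x) - 1) ≤
        ∑ x, Q x * ∑ k ∈ range N, (Real.exp (c * (k + 1)) - Real.exp (c * k)) *
          (if (k : ℝ) / N ≤ g x then 1 else 0) :=
      Finset.sum_le_sum fun x _ => mul_le_mul_of_nonneg_left (layer x) (hQ.1 x)
    have step2 : (∑ x, Q x * ∑ k ∈ range N, (Real.exp (c * (k + 1)) - Real.exp (c * k)) *
          (if (k : ℝ) / N ≤ g x then 1 else 0)) =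
        ∑ k ∈ range N, (Real.exp (c * (k + 1)) - Real.exp (c * k)) *
          ∑ x, Q x * (if (k : ℝ) / N ≤ g x then 1 else 0) := by
      simp_rw [Finset.mul_sum]
      rw [Finset.sum_comm]
      apply Finset.sum_congr rfl
      intro k _
      apply Finset.sum_congr rfl
      intro x _
      ring
    have step3 : ∀ k ∈ range N, (Real.exp (c * (k + 1)) - Real.exp (c * k)) *
        (∑ x, Q x * (if (k : ℝ) / N ≤ g x then 1 else 0)) ≤
        K₂ * Real.exp c * (Real.exp (-(c * k)) - Real.exp (-(c * (k + 1)))) := by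
      intro k hk
      have hA : 0 ≤ Real.exp (c * (k + 1)) - Real.exp (c * k) := by
        have : c * k ≤ c * (k + 1) := by nlinarith [hc.le]
        have := Real.exp_le_exp.mpr this
        linarith
      set t : ℝ := Real.sqrt ((k : ℝ) / N) with htdef
      have hkN1 : (k : ℝ) / N ≤ 1 := by
        rw [div_le_one hN0]
        exact_mod_cast (mem_range.mp hk).le
      have hkN0 : (0:ℝ) ≤ (k : ℝ) / N := by positivity
      have ht0 : 0 ≤ t := Real.sqrt_nonneg _
      have ht1 : t ≤ 1 := by
        rw [htdef, show (1:ℝ) = Real.sqrt 1 by simp]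
        exact Real.sqrt_le_sqrt hkN1
      have hind : (∑ x, Q x * (if (k : ℝ) / N ≤ g x then 1 else 0)) ≤
          ∑ x, Q x * (if t ≤ |X x| then 1 else 0) := by
        apply Finset.sum_le_sum
        intro x _
        apply mul_le_mul_of_nonneg_left _ (hQ.1 x)
        split_ifs with h1 h2
        · exact le_refl _
        · exfalso
          apply h2
          have hgx : (k : ℝ) / N ≤ X x ^ 2 := le_trans h1 (min_le_left _ _)
          calc t ≤ Real.sqrt (X x ^ 2) := Real.sqrt_le_sqrt hgx
            _ = |X x| := Real.sqrt_sq_eq_abs _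
        · norm_num
        · exact le_refl _
      have htail' := htail t ht0 ht1
      have htsq : t ^ 2 = (k : ℝ) / N := Real.sq_sqrt hkN0
      have hexp : -(t ^ 2) / (K₁ * σ2) = -(2 * c * (k : ℝ)) := by
        rw [htsq, hcdef, hLdef]
        field_simp
      rw [hexp] at htail'
      have e1 : Real.exp (c * (k + 1)) * Real.exp (-(2 * c * k)) =
          Real.exp c * Real.exp (-(c * k)) := by
        rw [← Real.exp_add, ← Real.exp_add]; ring_nf
      have e2 : Real.exp (c * k) * Real.exp (-(2 * c * k)) =
          Real.exp c * Real.exp (-(c * (k + 1))) := by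
        rw [← Real.exp_add, ← Real.exp_add]; ring_nf
      calc (Real.exp (c * (k + 1)) - Real.exp (c * k)) *
            (∑ x, Q x * (if (k : ℝ) / N ≤ g x then 1 else 0))
          ≤ (Real.exp (c * (k + 1)) - Real.exp (c * k)) * (K₂ * Real.exp (-(2 * c * k))) :=
            mul_le_mul_of_nonneg_left (hind.trans htail') hA
        _ = K₂ * (Real.exp (c * (k + 1)) * Real.exp (-(2 * c * k))) -
            K₂ * (Real.exp (c * k) * Real.exp (-(2 * c * k))) := by ring
        _ = K₂ * Real.exp c * (Real.exp (-(c * k)) - Real.exp (-(c * (k + 1)))) := by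
            rw [e1, e2]; ring
    have step4 : (∑ k ∈ range N, K₂ * Real.exp c *
        (Real.exp (-(c * k)) - Real.exp (-(c * (k + 1))))) ≤ 3 * K₂ := by
      have htel := Finset.sum_range_sub' (fun k : ℕ => Real.exp (-(c * k))) N
      simp only [Nat.cast_zero, mul_zero, neg_zero, Real.exp_zero] at htel
      have hsum : (∑ k ∈ range N, (Real.exp (-(c * k)) - Real.exp (-(c * (k + 1))))) =
          1 - Real.exp (-(c * N)) := by
        rw [← htel]
        apply Finset.sum_congr rfl
        intro k _
        push_cast
        ring_nf
      rw [← Finset.mul_sum, hsum]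
      have h1 : 0 < Real.exp (-(c * N)) := Real.exp_pos _
      have h2 : Real.exp c ≤ Real.exp 1 := Real.exp_le_exp.mpr hc1
      have h3 : Real.exp 1 ≤ 3 := by
        have := Real.exp_one_lt_d9
        linarith
      have h4 : 0 < Real.exp c := Real.exp_pos _
      nlinarith [mul_le_mul_of_nonneg_left (h2.trans h3) hK₂.le,
        mul_nonneg (mul_nonneg hK₂.le h4.le) h1.le]
    calc ∑ x, Q x * (Real.exp (L * g x) - 1)
        ≤ ∑ k ∈ range N, (Real.exp (c * (k + 1)) - Real.exp (c * k)) *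
          ∑ x, Q x * (if (k : ℝ) / N ≤ g x then 1 else 0) := step1.trans step2.le
      _ ≤ ∑ k ∈ range N, K₂ * Real.exp c *
          (Real.exp (-(c * k)) - Real.exp (-(c * (k + 1)))) := Finset.sum_le_sum step3
      _ ≤ 3 * K₂ := step4
  -- Step 3: apply the linearized DV inequality
  have hdv := dv_linear_aux P Q (fun x => L * g x) hP hQ hac
  have hZ : (∑ x, Q x * Real.exp (L * g x)) - 1 = ∑ x, Q x * (Real.exp (L * g x) - 1) := by
    simp_rw [mul_sub, mul_one]
    rw [Finset.sum_sub_distrib, hQ.2]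
  rw [hZ] at hdv
  have hdv2 : ∑ x, P x * (L * g x) ≤ KL P Q + 3 * K₂ := by
    calc ∑ x, P x * (L * g x) ≤ KL P Q + ∑ x, Q x * (Real.exp (L * g x) - 1) := hdv
      _ ≤ KL P Q + 3 * K₂ := by linarith
  -- Step 4: on the support of P, X² = g
  have hsupp : ∀ x, P x ≠ 0 → |X x| ≤ 1 := by
    have hle : ∀ x ∈ (univ : Finset α), P x * (if |X x| ≤ 1 then 1 else 0) ≤ P x := by
      intro x _
      split_ifs
      · simp
      · simpa using hP.1 x
    have heq := (Finset.sum_eq_sum_iff_of_le hle).mp (by rw [hPsupp, hP.2])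
    intro x hx
    by_contra h
    have := heq x (mem_univ x)
    simp [h] at this
    exact hx this.symm
  have hXg : ∑ x, P x * X x ^ 2 = ∑ x, P x * g x := by
    apply Finset.sum_congr rfl
    intro x _
    by_cases h : P x = 0
    · simp [h]
    · have h1 : |X x| ≤ 1 := hsupp x h
      have h2 : X x ^ 2 ≤ 1 := by
        have := sq_abs (X x)
        nlinarith [abs_nonneg (X x)]
      rw [hgdef]
      simp [min_eq_left h2]
  -- Step 5: combine
  have hKL := KL_nonneg_aux P Q hP hQ hac
  have hsum : L * (∑ x, P x * g x) ≤ KL P Q + 3 * K₂ := by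
    rw [Finset.mul_sum]
    calc (∑ x, L * (P x * g x)) = ∑ x, P x * (L * g x) := by
          apply Finset.sum_congr rfl; intro x _; ring
      _ ≤ KL P Q + 3 * K₂ := hdv2
  rw [hXg]
  have hLinv : 2 * K₁ * σ2 * L = 1 := by
    rw [hLdef]; field_simp
  have hS := mul_le_mul_of_nonneg_left hsum (by positivity : (0:ℝ) ≤ 2 * K₁ * σ2)
  have hS2 : (∑ x, P x * g x) ≤ 2 * K₁ * σ2 * (KL P Q + 3 * K₂) := by
    nlinarith [hS, hLinv]
  calc (∑ x, P x * g x) ≤ 2 * K₁ * σ2 * (KL P Q + 3 * K₂) := hS2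
    _ ≤ 2 * K₁ * (1 + 3 * K₂) * σ2 * (KL P Q + 1) := by nlinarith [mul_nonneg hK₂.le hKL]
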